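/- Writing Q̄_n(x) := (−1)^n Q_n(x), for all n ≥ 0 and all real x one has Q̄_{n+1}(x) = 1 + ∑_{j=0}^n (1/(p_j π_j)) ∑_{k=0}^j (2 r_k − 1 − x) π_k Q̄_k(x). -/

import Mathlib

open Finset Filter

theorem stmt4 (p q r : ℕ → ℝ) (Q : ℕ → ℝ → ℝ)
    (hp : ∀ j, 0 < p j) (hq : ∀ j, 0 < q (j + 1)) (hr : ∀ j, 0 ≤ r j)
    (hq0 : q 0 = 0) (hs : ∀ j, p j + q j + r j = 1)
    (hQ0 : ∀ x : ℝ, Q 0 x = 1) (hQ1 : ∀ x : ℝ, p 0 * Q 1 x = x - r 0)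
    (hQrec : ∀ n : ℕ, ∀ x : ℝ, x * Q (n + 1) x =
      q (n + 1) * Q n x + r (n + 1) * Q (n + 1) x + p (n + 1) * Q (n + 2) x)
    (π : ℕ → ℝ) (hπ0 : π 0 = 1) (hπ : ∀ n, π (n + 1) = π n * (p n / q (n + 1))) :
    ∀ (n : ℕ) (x : ℝ),
      (-1 : ℝ) ^ (n + 1) * Q (n + 1) x =
        1 + ∑ j ∈ Finset.range (n + 1), (1 / (p j * π j)) *
          ∑ k ∈ Finset.range (j + 1), (2 * r k - 1 - x) * π k * ((-1 : ℝ) ^ k * Q k x) := by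
  have hπpos : ∀ n, 0 < π n := by
    intro n
    induction n with
    | zero => rw [hπ0]; norm_num
    | succ n ih => rw [hπ n]; exact mul_pos ih (div_pos (hp n) (hq n))
  have hπq : ∀ n, π (n + 1) * q (n + 1) = π n * p n := by
    intro n
    rw [hπ n]
    field_simp [(hq n).ne']
  have key : ∀ (n : ℕ) (x : ℝ),
      ∑ k ∈ Finset.range (n + 1), (2 * r k - 1 - x) * π k * ((-1 : ℝ) ^ k * Q k x)
        = p n * π n * ((-1 : ℝ) ^ (n + 1) * Q (n + 1) x - (-1 : ℝ) ^ n * Q n x) := by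
    intro n x
    induction n with
    | zero =>
      rw [Finset.sum_range_one, hQ0, hπ0]
      have h1 := hQ1 x
      have h2 := hs 0
      linear_combination h1 + h2 - hq0
    | succ n ih =>
      rw [Finset.sum_range_succ, ih]
      have hrec := hQrec n x
      have hpq := hπq n
      have hsn := hs (n + 1)
      linear_combination ((-1 : ℝ) ^ n * π (n + 1)) * hrec
        + ((-1 : ℝ) ^ n * (Q n x + Q (n + 1) x)) * hpq
        - ((-1 : ℝ) ^ n * π (n + 1) * Q (n + 1) x) * hsn
  intro n x
  induction n with
  | zero =>
    rw [Finset.sum_range_one, key 0 x, hQ0, hπ0]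
    have h0 : p 0 ≠ 0 := (hp 0).ne'
    field_simp
    ring
  | succ n ih =>
    rw [Finset.sum_range_succ, key (n + 1) x, ← add_assoc, ← ih]
    have h1 : p (n + 1) ≠ 0 := (hp (n + 1)).ne'
    have h2 : π (n + 1) ≠ 0 := (hπpos (n + 1)).ne'
    field_simp
    ring
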